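/- Take a_n = 1/(100 n³) and let N ≥ 4 be an integer. Then the transfer operator L satisfies the Lasota–Yorke inequality ‖L f‖_Lip ≤ (3/4) ‖f‖_Lip + ‖f‖_{C⁰} for every bounded Lipschitz function f : [0,1) → ℂ. -/

import Mathlib

open MeasureTheory Set Filter

noncomputable section

namespace Gouezel

/-- `b a n = 4 * ∑_{k=1}^n a_k` (left endpoints of the intervals `I_n`). -/
def b (a : ℕ → ℝ) (n : ℕ) : ℝ := 4 * ∑ k ∈ Finset.range n, a (k + 1)

/-- `b_∞ = 4 * ∑_{n=1}^∞ a_n`. -/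
def binf (a : ℕ → ℝ) : ℝ := 4 * ∑' n : ℕ, a (n + 1)

/-- The length `|J| = 1 - b_∞` of the interval `J = [b_∞, 1)`. -/
def lenJ (a : ℕ → ℝ) : ℝ := 1 - binf a

/-- `v_n'(x) = a_n (1 + 2 cos²(2π n⁴ x))`. -/
def vd (a : ℕ → ℝ) (n : ℕ) (x : ℝ) : ℝ :=
  a n * (1 + 2 * Real.cos (2 * Real.pi * (n : ℝ) ^ 4 * x) ^ 2)

/-- `w_n'(x) = a_n (1 + 2 sin²(2π n⁴ x))`. -/
def wd (a : ℕ → ℝ) (n : ℕ) (x : ℝ) : ℝ :=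
  a n * (1 + 2 * Real.sin (2 * Real.pi * (n : ℝ) ^ 4 * x) ^ 2)

/-- The inverse branch `v_n(x) = b_{n-1} + ∫_0^x v_n'(t) dt`. -/
def v (a : ℕ → ℝ) (n : ℕ) (x : ℝ) : ℝ := b a (n - 1) + ∫ t in (0:ℝ)..x, vd a n t

/-- The inverse branch `w_n(x) = b_{n-1} + 2 a_n + ∫_0^x w_n'(t) dt`. -/
def w (a : ℕ → ℝ) (n : ℕ) (x : ℝ) : ℝ :=
  b a (n - 1) + 2 * a n + ∫ t in (0:ℝ)..x, wd a n t

/-- The affine inverse branches `u_j(x) = b_∞ + (j-1)|J|/N + (|J|/N) x`, `1 ≤ j ≤ N`. -/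
def u (a : ℕ → ℝ) (N : ℕ) (j : ℕ) (x : ℝ) : ℝ :=
  binf a + ((j : ℝ) - 1) * (lenJ a / N) + (lenJ a / N) * x

/-- The transfer operator on complex-valued functions. -/
def L (a : ℕ → ℝ) (N : ℕ) (f : ℝ → ℂ) (x : ℝ) : ℂ :=
  (∑' n : ℕ, ((vd a (n + 1) x : ℂ) * f (v a (n + 1) x)
      + (wd a (n + 1) x : ℂ) * f (w a (n + 1) x)))
    + ((lenJ a / (N : ℝ) : ℝ) : ℂ) * ∑ j ∈ Finset.range N, f (u a N (j + 1) x)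

/-- The transfer operator on real-valued functions. -/
def LR (a : ℕ → ℝ) (N : ℕ) (f : ℝ → ℝ) (x : ℝ) : ℝ :=
  (∑' n : ℕ, (vd a (n + 1) x * f (v a (n + 1) x) + wd a (n + 1) x * f (w a (n + 1) x)))
    + (lenJ a / N) * ∑ j ∈ Finset.range N, f (u a N (j + 1) x)

/-- The part `L_n` of the transfer operator coming from the branches `v_n, w_n`. -/
def Ln (a : ℕ → ℝ) (n : ℕ) (f : ℝ → ℂ) (x : ℝ) : ℂ :=
  (vd a n x : ℂ) * f (v a n x) + (wd a n x : ℂ) * f (w a n x)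

/-- Sup norm of `f` on `[0,1)`. -/
def supNorm (f : ℝ → ℂ) : ℝ := ⨆ x : Ico (0:ℝ) 1, ‖f x.1‖

/-- Best Lipschitz constant of `f` on `[0,1)` (the term at `x = y` is `0/0 = 0`). -/
def lipConst (f : ℝ → ℂ) : ℝ :=
  ⨆ p : Ico (0:ℝ) 1 × Ico (0:ℝ) 1, ‖f p.1.1 - f p.2.1‖ / |p.1.1 - p.2.1|

/-- Lipschitz norm `‖f‖_Lip = sup|f| + Lip(f)` on `[0,1)`. -/
def lipNorm (f : ℝ → ℂ) : ℝ := supNorm f + lipConst f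

/-- `f` is bounded and Lipschitz on `[0,1)`. -/
def BddLip (f : ℝ → ℂ) : Prop :=
  ∃ K : ℝ, (∀ x ∈ Ico (0:ℝ) 1, ‖f x‖ ≤ K) ∧
    ∀ x ∈ Ico (0:ℝ) 1, ∀ y ∈ Ico (0:ℝ) 1, ‖f x - f y‖ ≤ K * |x - y|

/-- The specific choice `a_n = 1/(100 n³)`. -/
def aa (n : ℕ) : ℝ := 1 / (100 * (n : ℝ) ^ 3)

/-- Standing hypotheses on the sequence `(a_n)`: positivity and `∑ a_n < 1/4`. -/
def StdHyp (a : ℕ → ℝ) : Prop :=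
  (∀ n : ℕ, 1 ≤ n → 0 < a n) ∧ Summable (fun n : ℕ => a (n + 1)) ∧
    (∑' n : ℕ, a (n + 1)) < 1 / 4

/-- `T : [0,1) → [0,1)` has the maps `v_n, w_n` (`n ≥ 1`) and `u_j` (`1 ≤ j ≤ N`)
as inverse branches. -/
def InverseBranches (a : ℕ → ℝ) (N : ℕ) (T : ℝ → ℝ) : Prop :=
  MapsTo T (Ico (0:ℝ) 1) (Ico (0:ℝ) 1) ∧
    ∀ x ∈ Ico (0:ℝ) 1,
      (∀ n : ℕ, 1 ≤ n → T (v a n x) = x ∧ T (w a n x) = x) ∧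
      (∀ j : ℕ, 1 ≤ j → j ≤ N → T (u a N j x) = x)


open Real

private lemma cos_lip (s t : ℝ) : |Real.cos s - Real.cos t| ≤ |s - t| := by
  rw [Real.cos_sub_cos, abs_mul, abs_mul, abs_neg]
  have h1 : |Real.sin ((s+t)/2)| ≤ 1 := Real.abs_sin_le_one _
  have h2 : |Real.sin ((s-t)/2)| ≤ |s-t|/2 := by
    have h3 : |(s-t)/2| = |s-t|/2 := by rw [abs_div]; norm_num
    exact h3 ▸ Real.abs_sin_le_abs
  have h4 : |(2:ℝ)| = 2 := by norm_num
  rw [h4]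
  nlinarith [abs_nonneg (Real.sin ((s+t)/2)), abs_nonneg (s-t), abs_nonneg (Real.sin ((s-t)/2))]

private lemma hasSum_inv_sq : HasSum (fun n : ℕ => (1:ℝ)/((n:ℝ)+1)^2) (π^2/6) := by
  have h := hasSum_zeta_two
  have h3 := (hasSum_nat_add_iff' (f := fun n : ℕ => (1:ℝ)/(n:ℝ)^2) 1).mpr h
  simp only [Finset.range_one, Finset.sum_singleton, Nat.cast_zero] at h3
  norm_num at h3
  convert h3 using 2 with n
  · rfl
  · exact one_div _

private lemma summable_inv_sq : Summable (fun n : ℕ => (1:ℝ)/((n:ℝ)+1)^2) :=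
  hasSum_inv_sq.summable

private lemma tsum_inv_sq_le : (∑' n : ℕ, (1:ℝ)/((n:ℝ)+1)^2) ≤ 2 := by
  rw [hasSum_inv_sq.tsum_eq]
  nlinarith [Real.pi_lt_d2, Real.pi_pos]

lemma aa_pos {m : ℕ} (hm : 1 ≤ m) : 0 < aa m := by
  have hm' : (0:ℝ) < (m:ℝ) := by exact_mod_cast hm
  exact div_pos one_pos (by nlinarith [pow_pos hm' 3])

lemma aa_le {m : ℕ} (hm : 1 ≤ m) : aa m ≤ 1/100 := by
  have hm' : (1:ℝ) ≤ (m:ℝ) := by exact_mod_cast hm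
  have h3 : (1:ℝ) ≤ (m:ℝ)^3 := one_le_pow₀ hm'
  rw [aa, div_le_div_iff₀ (by nlinarith) (by norm_num)]
  nlinarith

lemma aa_le_inv_sq (n : ℕ) : aa (n+1) ≤ (1/100) * ((1:ℝ)/((n:ℝ)+1)^2) := by
  have hm' : (1:ℝ) ≤ ((n:ℝ)+1) := le_add_of_nonneg_left (Nat.cast_nonneg n)
  have key : (1:ℝ)/(100*((n:ℝ)+1)^3) ≤ 1/(100*((n:ℝ)+1)^2) := by
    apply one_div_le_one_div_of_le (by positivity)
    nlinarith [sq_nonneg ((n:ℝ)+1)]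
  calc aa (n+1) = 1/(100*((n:ℝ)+1)^3) := by rw [aa]; push_cast; ring_nf
    _ ≤ 1/(100*((n:ℝ)+1)^2) := key
    _ = (1/100) * ((1:ℝ)/((n:ℝ)+1)^2) := by rw [div_mul_div_comm]; norm_num

lemma summable_aa : Summable (fun n : ℕ => aa (n+1)) := by
  apply Summable.of_nonneg_of_le (fun n => (aa_pos (by omega)).le) aa_le_inv_sq
  exact summable_inv_sq.mul_left _

lemma tsum_aa_le : (∑' n : ℕ, aa (n+1)) ≤ 1/50 := by
  calc (∑' n : ℕ, aa (n+1)) ≤ ∑' n : ℕ, (1/100) * ((1:ℝ)/((n:ℝ)+1)^2) :=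
        Summable.tsum_le_tsum aa_le_inv_sq summable_aa (summable_inv_sq.mul_left _)
    _ = (1/100) * ∑' n : ℕ, (1:ℝ)/((n:ℝ)+1)^2 := tsum_mul_left
    _ ≤ (1/100) * 2 := by nlinarith [tsum_inv_sq_le]
    _ = 1/50 := by norm_num

lemma tsum_aa_nonneg : 0 ≤ (∑' n : ℕ, aa (n+1)) :=
  tsum_nonneg (fun n => (aa_pos (by omega)).le)

lemma binf_aa_nonneg : 0 ≤ binf aa := by
  rw [binf]; nlinarith [tsum_aa_nonneg]

lemma binf_aa_le : binf aa ≤ 2/25 := by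
  rw [binf]; nlinarith [tsum_aa_le]

lemma b_aa_nonneg (n : ℕ) : 0 ≤ b aa n := by
  rw [b]
  have : 0 ≤ ∑ k ∈ Finset.range n, aa (k+1) :=
    Finset.sum_nonneg (fun k _ => (aa_pos (by omega)).le)
  linarith

lemma b_le_binf (n : ℕ) : b aa n ≤ binf aa := by
  rw [b, binf]
  have := Summable.sum_le_tsum (Finset.range n) (fun k _ => (aa_pos (m := k+1) (by omega)).le) summable_aa
  linarith

lemma lenJ_aa_pos : 0 < lenJ aa := by rw [lenJ]; nlinarith [binf_aa_le]

lemma lenJ_aa_le_one : lenJ aa ≤ 1 := by rw [lenJ]; nlinarith [binf_aa_nonneg]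

-- vd / wd pointwise bounds
lemma vd_lb {m : ℕ} (hm : 1 ≤ m) (x : ℝ) : aa m ≤ vd aa m x := by
  rw [vd]
  nlinarith [aa_pos hm, sq_nonneg (Real.cos (2*π*(m:ℝ)^4*x))]

lemma vd_ub {m : ℕ} (hm : 1 ≤ m) (x : ℝ) : vd aa m x ≤ 3 * aa m := by
  rw [vd]
  nlinarith [aa_pos hm, Real.cos_sq_le_one (2*π*(m:ℝ)^4*x)]

lemma wd_lb {m : ℕ} (hm : 1 ≤ m) (x : ℝ) : aa m ≤ wd aa m x := by
  rw [wd]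
  nlinarith [aa_pos hm, sq_nonneg (Real.sin (2*π*(m:ℝ)^4*x))]

lemma wd_ub {m : ℕ} (hm : 1 ≤ m) (x : ℝ) : wd aa m x ≤ 3 * aa m := by
  rw [wd]
  nlinarith [aa_pos hm, Real.sin_sq_le_one (2*π*(m:ℝ)^4*x)]

lemma vd_add_wd (m : ℕ) (x : ℝ) : vd aa m x + wd aa m x = 4 * aa m := by
  rw [vd, wd]
  have h := Real.sin_sq_add_cos_sq (2*π*(m:ℝ)^4*x)
  linear_combination (2 * aa m) * h

lemma cont_vd (m : ℕ) : Continuous (vd aa m) := by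
  unfold vd; fun_prop

lemma cont_wd (m : ℕ) : Continuous (wd aa m) := by
  unfold wd; fun_prop

lemma vd_diff {m : ℕ} (hm : 1 ≤ m) (x y : ℝ) :
    |vd aa m x - vd aa m y| ≤ 8 * π * (m:ℝ)^4 * aa m * |x - y| := by
  have ha := aa_pos hm
  set c := 2*π*(m:ℝ)^4 with hc
  have hdiff : vd aa m x - vd aa m y
      = aa m * 2 * ((Real.cos (c*x) - Real.cos (c*y)) * (Real.cos (c*x) + Real.cos (c*y))) := by
    rw [vd, vd]; ring
  rw [hdiff, abs_mul]
  have h1 : |Real.cos (c*x) - Real.cos (c*y)| ≤ c * |x - y| := by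
    have := cos_lip (c*x) (c*y)
    have hc0 : 0 ≤ c := by rw [hc]; positivity
    calc |Real.cos (c*x) - Real.cos (c*y)| ≤ |c*x - c*y| := this
      _ = c * |x - y| := by rw [← mul_sub, abs_mul, abs_of_nonneg hc0]
  have h2 : |Real.cos (c*x) + Real.cos (c*y)| ≤ 2 := by
    have := Real.abs_cos_le_one (c*x)
    have := Real.abs_cos_le_one (c*y)
    calc |Real.cos (c*x) + Real.cos (c*y)| ≤ |Real.cos (c*x)| + |Real.cos (c*y)| := abs_add_le _ _
      _ ≤ 2 := by linarith
  have h3 : |(Real.cos (c*x) - Real.cos (c*y)) * (Real.cos (c*x) + Real.cos (c*y))|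
      ≤ (c * |x-y|) * 2 := by
    rw [abs_mul]
    exact mul_le_mul h1 h2 (abs_nonneg _) (by positivity)
  have h4 : |aa m * 2| = aa m * 2 := abs_of_nonneg (by linarith)
  rw [h4]
  calc aa m * 2 * |(Real.cos (c*x) - Real.cos (c*y)) * (Real.cos (c*x) + Real.cos (c*y))|
      ≤ aa m * 2 * ((c * |x-y|) * 2) := by
        exact mul_le_mul_of_nonneg_left h3 (by linarith)
    _ = 8 * π * (m:ℝ)^4 * aa m * |x - y| := by rw [hc]; ring

lemma wd_sub_wd (m : ℕ) (x y : ℝ) : wd aa m x - wd aa m y = -(vd aa m x - vd aa m y) := by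
  have h1 := vd_add_wd m x
  have h2 := vd_add_wd m y
  linarith

lemma vd_sub_wd_abs {m : ℕ} (hm : 1 ≤ m) (t : ℝ) : |vd aa m t - wd aa m t| ≤ 2 * aa m := by
  have := vd_lb hm t; have := vd_ub hm t; have := wd_lb hm t; have := wd_ub hm t
  rw [abs_le]; constructor <;> linarith

lemma intble_vd (m : ℕ) (x y : ℝ) : IntervalIntegrable (vd aa m) volume x y :=
  (cont_vd m).intervalIntegrable x y

lemma intble_wd (m : ℕ) (x y : ℝ) : IntervalIntegrable (wd aa m) volume x y :=
  (cont_wd m).intervalIntegrable x y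

lemma integral_vd_abs {m : ℕ} (hm : 1 ≤ m) (x y : ℝ) :
    |∫ t in y..x, vd aa m t| ≤ 3 * aa m * |x - y| := by
  have := intervalIntegral.norm_integral_le_of_norm_le_const
    (C := 3 * aa m) (f := vd aa m) (a := y) (b := x) ?_
  · simpa [Real.norm_eq_abs] using this
  · intro t _
    rw [Real.norm_eq_abs, abs_of_nonneg (le_trans (aa_pos hm).le (vd_lb hm t))]
    exact vd_ub hm t

lemma integral_wd_abs {m : ℕ} (hm : 1 ≤ m) (x y : ℝ) :
    |∫ t in y..x, wd aa m t| ≤ 3 * aa m * |x - y| := by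
  have := intervalIntegral.norm_integral_le_of_norm_le_const
    (C := 3 * aa m) (f := wd aa m) (a := y) (b := x) ?_
  · simpa [Real.norm_eq_abs] using this
  · intro t _
    rw [Real.norm_eq_abs, abs_of_nonneg (le_trans (aa_pos hm).le (wd_lb hm t))]
    exact wd_ub hm t

lemma v_diff {m : ℕ} (hm : 1 ≤ m) (x y : ℝ) :
    |v aa m x - v aa m y| ≤ 3 * aa m * |x - y| := by
  have h : v aa m x - v aa m y = ∫ t in y..x, vd aa m t := by
    rw [v, v]
    have := intervalIntegral.integral_interval_sub_left (intble_vd m 0 x) (intble_vd m 0 y)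
    linarith
  rw [h]; exact integral_vd_abs hm x y

lemma w_diff {m : ℕ} (hm : 1 ≤ m) (x y : ℝ) :
    |w aa m x - w aa m y| ≤ 3 * aa m * |x - y| := by
  have h : w aa m x - w aa m y = ∫ t in y..x, wd aa m t := by
    rw [w, w]
    have := intervalIntegral.integral_interval_sub_left (intble_wd m 0 x) (intble_wd m 0 y)
    linarith
  rw [h]; exact integral_wd_abs hm x y

lemma v_mem {m : ℕ} (hm : 1 ≤ m) {x : ℝ} (hx : x ∈ Ico (0:ℝ) 1) :
    v aa m x ∈ Ico (0:ℝ) 1 := by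
  obtain ⟨hx0, hx1⟩ := hx
  have ha := aa_pos hm
  have hau := aa_le hm
  have hbl := b_aa_nonneg (m-1)
  have hbu := (b_le_binf (m-1)).trans binf_aa_le
  have hint_nn : 0 ≤ ∫ t in (0:ℝ)..x, vd aa m t := by
    apply intervalIntegral.integral_nonneg hx0
    intro t _
    exact (aa_pos hm).le.trans (vd_lb hm t)
  have hint_ub : (∫ t in (0:ℝ)..x, vd aa m t) ≤ 3 * aa m * x := by
    have := integral_vd_abs hm x 0
    rw [sub_zero, abs_of_nonneg hx0] at this
    exact (le_abs_self _).trans this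
  constructor
  · rw [v]; linarith
  · rw [v]
    have : 3 * aa m * x < 3 * aa m := by nlinarith
    have h100 : 3 * aa m ≤ 3/100 := by linarith
    linarith

lemma w_mem {m : ℕ} (hm : 1 ≤ m) {x : ℝ} (hx : x ∈ Ico (0:ℝ) 1) :
    w aa m x ∈ Ico (0:ℝ) 1 := by
  obtain ⟨hx0, hx1⟩ := hx
  have ha := aa_pos hm
  have hau := aa_le hm
  have hbl := b_aa_nonneg (m-1)
  have hbu := (b_le_binf (m-1)).trans binf_aa_le
  have hint_nn : 0 ≤ ∫ t in (0:ℝ)..x, wd aa m t := by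
    apply intervalIntegral.integral_nonneg hx0
    intro t _
    exact (aa_pos hm).le.trans (wd_lb hm t)
  have hint_ub : (∫ t in (0:ℝ)..x, wd aa m t) ≤ 3 * aa m * x := by
    have := integral_wd_abs hm x 0
    rw [sub_zero, abs_of_nonneg hx0] at this
    exact (le_abs_self _).trans this
  constructor
  · rw [w]; linarith
  · rw [w]
    have : 3 * aa m * x < 3 * aa m := by nlinarith
    linarith

lemma v_sub_w {m : ℕ} (hm : 1 ≤ m) {x : ℝ} (hx : x ∈ Ico (0:ℝ) 1) :
    |v aa m x - w aa m x| ≤ 4 * aa m := by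
  obtain ⟨hx0, hx1⟩ := hx
  have ha := aa_pos hm
  have h : v aa m x - w aa m x = -(2 * aa m) + ∫ t in (0:ℝ)..x, (vd aa m t - wd aa m t) := by
    rw [v, w, intervalIntegral.integral_sub (intble_vd m 0 x) (intble_wd m 0 x)]
    ring
  have hint : |∫ t in (0:ℝ)..x, (vd aa m t - wd aa m t)| ≤ 2 * aa m := by
    have := intervalIntegral.norm_integral_le_of_norm_le_const
      (C := 2 * aa m) (f := fun t => vd aa m t - wd aa m t) (a := 0) (b := x)
      (fun t _ => by rw [Real.norm_eq_abs]; exact vd_sub_wd_abs hm t)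
    rw [Real.norm_eq_abs] at this
    calc |∫ t in (0:ℝ)..x, (vd aa m t - wd aa m t)| ≤ 2 * aa m * |x - 0| := this
      _ ≤ 2 * aa m := by rw [sub_zero, abs_of_nonneg hx0]; nlinarith
  rw [h]
  calc |-(2 * aa m) + ∫ t in (0:ℝ)..x, (vd aa m t - wd aa m t)|
      ≤ |-(2 * aa m)| + |∫ t in (0:ℝ)..x, (vd aa m t - wd aa m t)| := abs_add_le _ _
    _ ≤ 2 * aa m + 2 * aa m := by
        rw [abs_neg, abs_of_nonneg (by linarith : (0:ℝ) ≤ 2 * aa m)]; linarith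
    _ = 4 * aa m := by ring

lemma u_mem {N : ℕ} (hN : 4 ≤ N) {j : ℕ} (hj : j < N) {x : ℝ} (hx : x ∈ Ico (0:ℝ) 1) :
    u aa N (j+1) x ∈ Ico (0:ℝ) 1 := by
  obtain ⟨hx0, hx1⟩ := hx
  have hNpos : (0:ℝ) < N := by
    have : 0 < N := by omega
    exact_mod_cast this
  have hlJ := lenJ_aa_pos
  have hlJ1 := lenJ_aa_le_one
  have hq : 0 < lenJ aa / N := div_pos hlJ hNpos
  have hb0 := binf_aa_nonneg
  have hjN : ((j:ℝ)+1) ≤ (N:ℝ) := by exact_mod_cast hj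
  constructor
  · rw [u]
    push_cast
    nlinarith [Nat.cast_nonneg (α := ℝ) j]
  · rw [u]
    push_cast
    have h1 : (lenJ aa / N) * x < lenJ aa / N := by nlinarith
    have h2 : ((j:ℝ)+1-1) * (lenJ aa / N) + lenJ aa / N ≤ lenJ aa := by
      have : ((j:ℝ)+1) * (lenJ aa / N) ≤ (N:ℝ) * (lenJ aa / N) :=
        mul_le_mul_of_nonneg_right hjN hq.le
      have hNe : (N:ℝ) * (lenJ aa / N) = lenJ aa := by field_simp
      nlinarith
    have : binf aa + lenJ aa = 1 := by rw [lenJ]; ring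
    nlinarith

lemma u_diff (N : ℕ) (j : ℕ) (x y : ℝ) :
    u aa N (j+1) x - u aa N (j+1) y = (lenJ aa / N) * (x - y) := by
  rw [u, u]; ring

lemma key_ineq {m : ℕ} (hm : 1 ≤ m) :
    (32*π*(m:ℝ)^4 + 18) * (aa m)^2 ≤ 1/(50*((m:ℝ))^2) := by
  have hm' : (1:ℝ) ≤ (m:ℝ) := by exact_mod_cast hm
  have hm0 : (0:ℝ) < (m:ℝ) := by linarith
  have haa : aa m = 1/(100*(m:ℝ)^3) := rfl
  have hpi := Real.pi_lt_d2
  have hpi0 := Real.pi_pos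
  rw [haa, div_pow, one_pow, mul_pow, mul_one_div]
  rw [div_le_div_iff₀ (by positivity) (by positivity)]
  have h26 : (m:ℝ)^2 ≤ (m:ℝ)^6 := pow_le_pow_right₀ hm' (by norm_num)
  have hexp : 1 * ((100:ℝ)^2 * ((m:ℝ)^3)^2) = 10000 * (m:ℝ)^6 := by ring
  rw [hexp]
  nlinarith [pow_pos hm0 6, pow_pos hm0 2, mul_le_mul_of_nonneg_right hpi.le (pow_pos hm0 6).le]

lemma term_diff_bound (f : ℝ → ℂ) (Kf : ℝ) (hKf0 : 0 ≤ Kf)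
    (hK : ∀ s ∈ Ico (0:ℝ) 1, ∀ t ∈ Ico (0:ℝ) 1, ‖f s - f t‖ ≤ Kf * |s - t|)
    {m : ℕ} (hm : 1 ≤ m) {x y : ℝ} (hx : x ∈ Ico (0:ℝ) 1) (hy : y ∈ Ico (0:ℝ) 1) :
    ‖((vd aa m x : ℂ) * f (v aa m x) + (wd aa m x : ℂ) * f (w aa m x))
      - ((vd aa m y : ℂ) * f (v aa m y) + (wd aa m y : ℂ) * f (w aa m y))‖
      ≤ (1/(50*((m:ℝ))^2)) * (Kf * |x - y|) := by
  have ha := aa_pos hm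
  have hwx : wd aa m x = 4*aa m - vd aa m x := by linarith [vd_add_wd m x]
  have hwy : wd aa m y = 4*aa m - vd aa m y := by linarith [vd_add_wd m y]
  have hid : ((vd aa m x : ℂ) * f (v aa m x) + (wd aa m x : ℂ) * f (w aa m x))
      - ((vd aa m y : ℂ) * f (v aa m y) + (wd aa m y : ℂ) * f (w aa m y))
      = ((vd aa m x - vd aa m y : ℝ) : ℂ) * (f (v aa m x) - f (w aa m x))
        + ((vd aa m y : ℝ) : ℂ) * (f (v aa m x) - f (v aa m y))
        + ((wd aa m y : ℝ) : ℂ) * (f (w aa m x) - f (w aa m y)) := by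
    rw [hwx, hwy]; push_cast; ring
  rw [hid]
  have hnA : ‖((vd aa m x - vd aa m y : ℝ) : ℂ) * (f (v aa m x) - f (w aa m x))‖
      ≤ (8*π*(m:ℝ)^4*aa m*|x-y|) * (Kf * (4*aa m)) := by
    rw [norm_mul, Complex.norm_real, Real.norm_eq_abs]
    apply mul_le_mul (vd_diff hm x y) ?_ (norm_nonneg _) (by positivity)
    calc ‖f (v aa m x) - f (w aa m x)‖ ≤ Kf * |v aa m x - w aa m x| :=
          hK _ (v_mem hm hx) _ (w_mem hm hx)
      _ ≤ Kf * (4*aa m) := mul_le_mul_of_nonneg_left (v_sub_w hm hx) hKf0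
  have hnB : ‖((vd aa m y : ℝ) : ℂ) * (f (v aa m x) - f (v aa m y))‖
      ≤ (3*aa m) * (Kf * (3*aa m*|x-y|)) := by
    rw [norm_mul, Complex.norm_real, Real.norm_eq_abs]
    apply mul_le_mul ?_ ?_ (norm_nonneg _) (by positivity)
    · rw [abs_of_nonneg (ha.le.trans (vd_lb hm y))]; exact vd_ub hm y
    · calc ‖f (v aa m x) - f (v aa m y)‖ ≤ Kf * |v aa m x - v aa m y| :=
            hK _ (v_mem hm hx) _ (v_mem hm hy)
        _ ≤ Kf * (3*aa m*|x-y|) := mul_le_mul_of_nonneg_left (v_diff hm x y) hKf0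
  have hnC : ‖((wd aa m y : ℝ) : ℂ) * (f (w aa m x) - f (w aa m y))‖
      ≤ (3*aa m) * (Kf * (3*aa m*|x-y|)) := by
    rw [norm_mul, Complex.norm_real, Real.norm_eq_abs]
    apply mul_le_mul ?_ ?_ (norm_nonneg _) (by positivity)
    · rw [abs_of_nonneg (ha.le.trans (wd_lb hm y))]; exact wd_ub hm y
    · calc ‖f (w aa m x) - f (w aa m y)‖ ≤ Kf * |w aa m x - w aa m y| :=
            hK _ (w_mem hm hx) _ (w_mem hm hy)
        _ ≤ Kf * (3*aa m*|x-y|) := mul_le_mul_of_nonneg_left (w_diff hm x y) hKf0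
  calc ‖_ + _ + _‖ ≤ ‖((vd aa m x - vd aa m y : ℝ) : ℂ) * (f (v aa m x) - f (w aa m x))‖
        + ‖((vd aa m y : ℝ) : ℂ) * (f (v aa m x) - f (v aa m y))‖
        + ‖((wd aa m y : ℝ) : ℂ) * (f (w aa m x) - f (w aa m y))‖ := norm_add₃_le
    _ ≤ (8*π*(m:ℝ)^4*aa m*|x-y|) * (Kf * (4*aa m))
        + (3*aa m) * (Kf * (3*aa m*|x-y|)) + (3*aa m) * (Kf * (3*aa m*|x-y|)) := by
        gcongr
    _ = ((32*π*(m:ℝ)^4 + 18) * (aa m)^2) * (Kf * |x-y|) := by ring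
    _ ≤ (1/(50*((m:ℝ))^2)) * (Kf * |x - y|) :=
        mul_le_mul_of_nonneg_right (key_ineq hm) (by positivity)

lemma summable_term (f : ℝ → ℂ) (Sf : ℝ)
    (hS : ∀ z ∈ Ico (0:ℝ) 1, ‖f z‖ ≤ Sf) {x : ℝ} (hx : x ∈ Ico (0:ℝ) 1) :
    Summable (fun n : ℕ =>
      (vd aa (n+1) x : ℂ) * f (v aa (n+1) x) + (wd aa (n+1) x : ℂ) * f (w aa (n+1) x)) := by
  apply Summable.of_norm_bounded (g := fun n => aa (n+1) * (4*Sf)) (summable_aa.mul_right _)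
  intro n
  have hm : 1 ≤ n+1 := by omega
  have ha := aa_pos hm
  have h1 : ‖(vd aa (n+1) x : ℂ) * f (v aa (n+1) x)‖ ≤ vd aa (n+1) x * Sf := by
    rw [norm_mul, Complex.norm_real, Real.norm_eq_abs,
      abs_of_nonneg (ha.le.trans (vd_lb hm x))]
    exact mul_le_mul_of_nonneg_left (hS _ (v_mem hm hx)) (ha.le.trans (vd_lb hm x))
  have h2 : ‖(wd aa (n+1) x : ℂ) * f (w aa (n+1) x)‖ ≤ wd aa (n+1) x * Sf := by
    rw [norm_mul, Complex.norm_real, Real.norm_eq_abs,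
      abs_of_nonneg (ha.le.trans (wd_lb hm x))]
    exact mul_le_mul_of_nonneg_left (hS _ (w_mem hm hx)) (ha.le.trans (wd_lb hm x))
  calc ‖_ + _‖ ≤ _ := norm_add_le _ _
    _ ≤ vd aa (n+1) x * Sf + wd aa (n+1) x * Sf := add_le_add h1 h2
    _ = aa (n+1) * (4*Sf) := by
        have h := vd_add_wd (n+1) x; linear_combination Sf * h

lemma Lsup_bound (N : ℕ) (hN : 4 ≤ N) (f : ℝ → ℂ) (Sf : ℝ) (hSf0 : 0 ≤ Sf)
    (hS : ∀ z ∈ Ico (0:ℝ) 1, ‖f z‖ ≤ Sf) {x : ℝ} (hx : x ∈ Ico (0:ℝ) 1) :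
    ‖L aa N f x‖ ≤ Sf := by
  have hNpos : (0:ℝ) < N := by
    have : 0 < N := by omega
    exact_mod_cast this
  have hq0 : 0 ≤ lenJ aa / N := (div_pos lenJ_aa_pos hNpos).le
  rw [L]
  have htsum : ‖∑' n : ℕ, ((vd aa (n+1) x : ℂ) * f (v aa (n+1) x)
      + (wd aa (n+1) x : ℂ) * f (w aa (n+1) x))‖ ≤ (∑' n : ℕ, aa (n+1)) * (4*Sf) := by
    have hb : ∀ n : ℕ, ‖(vd aa (n+1) x : ℂ) * f (v aa (n+1) x)
        + (wd aa (n+1) x : ℂ) * f (w aa (n+1) x)‖ ≤ aa (n+1) * (4*Sf) := by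
      intro n
      have hm : 1 ≤ n+1 := by omega
      have ha := aa_pos hm
      have h1 : ‖(vd aa (n+1) x : ℂ) * f (v aa (n+1) x)‖ ≤ vd aa (n+1) x * Sf := by
        rw [norm_mul, Complex.norm_real, Real.norm_eq_abs,
          abs_of_nonneg (ha.le.trans (vd_lb hm x))]
        exact mul_le_mul_of_nonneg_left (hS _ (v_mem hm hx)) (ha.le.trans (vd_lb hm x))
      have h2 : ‖(wd aa (n+1) x : ℂ) * f (w aa (n+1) x)‖ ≤ wd aa (n+1) x * Sf := by
        rw [norm_mul, Complex.norm_real, Real.norm_eq_abs,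
          abs_of_nonneg (ha.le.trans (wd_lb hm x))]
        exact mul_le_mul_of_nonneg_left (hS _ (w_mem hm hx)) (ha.le.trans (wd_lb hm x))
      calc ‖_ + _‖ ≤ _ := norm_add_le _ _
        _ ≤ vd aa (n+1) x * Sf + wd aa (n+1) x * Sf := add_le_add h1 h2
        _ = aa (n+1) * (4*Sf) := by
            have h := vd_add_wd (n+1) x; linear_combination Sf * h
    have hsum : HasSum (fun n : ℕ => aa (n+1) * (4*Sf)) ((∑' n : ℕ, aa (n+1)) * (4*Sf)) := by
      rw [← tsum_mul_right]
      exact (summable_aa.mul_right _).hasSum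
    exact tsum_of_norm_bounded hsum hb
  have hfin : ‖((lenJ aa / (N:ℝ) : ℝ) : ℂ) * ∑ j ∈ Finset.range N, f (u aa N (j+1) x)‖
      ≤ lenJ aa * Sf := by
    rw [norm_mul, Complex.norm_real, Real.norm_eq_abs, abs_of_nonneg hq0]
    have h1 : ‖∑ j ∈ Finset.range N, f (u aa N (j+1) x)‖ ≤ (N:ℝ) * Sf := by
      calc ‖∑ j ∈ Finset.range N, f (u aa N (j+1) x)‖
          ≤ ∑ j ∈ Finset.range N, ‖f (u aa N (j+1) x)‖ := norm_sum_le _ _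
        _ ≤ ∑ _j ∈ Finset.range N, Sf := by
            apply Finset.sum_le_sum
            intro j hj
            exact hS _ (u_mem hN (Finset.mem_range.mp hj) hx)
        _ = (N:ℝ) * Sf := by rw [Finset.sum_const, Finset.card_range]; simp [nsmul_eq_mul]
    calc lenJ aa / N * ‖∑ j ∈ Finset.range N, f (u aa N (j+1) x)‖
        ≤ lenJ aa / N * ((N:ℝ) * Sf) := mul_le_mul_of_nonneg_left h1 hq0
      _ = lenJ aa * Sf := by field_simp
  calc ‖_ + _‖ ≤ _ := norm_add_le _ _
    _ ≤ (∑' n : ℕ, aa (n+1)) * (4*Sf) + lenJ aa * Sf := add_le_add htsum hfin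
    _ = Sf := by rw [lenJ, binf]; ring

lemma Llip_bound (N : ℕ) (hN : 4 ≤ N) (f : ℝ → ℂ) (Sf Kf : ℝ) (hSf0 : 0 ≤ Sf) (hKf0 : 0 ≤ Kf)
    (hS : ∀ z ∈ Ico (0:ℝ) 1, ‖f z‖ ≤ Sf)
    (hK : ∀ s ∈ Ico (0:ℝ) 1, ∀ t ∈ Ico (0:ℝ) 1, ‖f s - f t‖ ≤ Kf * |s - t|)
    {x y : ℝ} (hx : x ∈ Ico (0:ℝ) 1) (hy : y ∈ Ico (0:ℝ) 1) :
    ‖L aa N f x - L aa N f y‖ ≤ (3/4) * (Kf * |x - y|) := by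
  have hNpos : (0:ℝ) < N := by
    have : 0 < N := by omega
    exact_mod_cast this
  have hq0 : 0 ≤ lenJ aa / N := (div_pos lenJ_aa_pos hNpos).le
  set gx : ℕ → ℂ := fun n => (vd aa (n+1) x : ℂ) * f (v aa (n+1) x)
      + (wd aa (n+1) x : ℂ) * f (w aa (n+1) x) with hgx
  set gy : ℕ → ℂ := fun n => (vd aa (n+1) y : ℂ) * f (v aa (n+1) y)
      + (wd aa (n+1) y : ℂ) * f (w aa (n+1) y) with hgy
  have hsx : Summable gx := summable_term f Sf hS hx
  have hsy : Summable gy := summable_term f Sf hS hy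
  have hsplit : L aa N f x - L aa N f y
      = (∑' n, (gx n - gy n))
        + ((lenJ aa / (N:ℝ) : ℝ) : ℂ) * ∑ j ∈ Finset.range N,
            (f (u aa N (j+1) x) - f (u aa N (j+1) y)) := by
    rw [L, L, Summable.tsum_sub hsx hsy, Finset.sum_sub_distrib]
    rw [hgx, hgy]
    ring
  rw [hsplit]
  have htsum : ‖∑' n, (gx n - gy n)‖ ≤ (Kf * |x - y|) / 25 := by
    have hb : ∀ n : ℕ, ‖gx n - gy n‖ ≤ (1/(((n:ℝ)+1)^2)) * (Kf * |x-y| / 50) := by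
      intro n
      have h := term_diff_bound f Kf hKf0 hK (m := n+1) (by omega) hx hy
      calc ‖gx n - gy n‖ ≤ (1/(50*(((n+1:ℕ)):ℝ)^2)) * (Kf * |x - y|) := h
        _ = (1/(((n:ℝ)+1)^2)) * (Kf * |x-y| / 50) := by
            have h2 : ((n:ℝ)+1)^2 ≠ 0 := by positivity
            push_cast
            field_simp
    have hsum : HasSum (fun n : ℕ => (1/(((n:ℝ)+1)^2)) * (Kf * |x-y| / 50))
        ((∑' n : ℕ, (1:ℝ)/(((n:ℝ)+1)^2)) * (Kf * |x-y| / 50)) := by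
      rw [← tsum_mul_right]
      exact ((summable_inv_sq.mul_right _)).hasSum
    have h2 := tsum_of_norm_bounded hsum hb
    calc ‖∑' n, (gx n - gy n)‖
        ≤ (∑' n : ℕ, (1:ℝ)/(((n:ℝ)+1)^2)) * (Kf * |x-y| / 50) := h2
      _ ≤ 2 * (Kf * |x-y| / 50) :=
          mul_le_mul_of_nonneg_right tsum_inv_sq_le (by positivity)
      _ = (Kf * |x - y|) / 25 := by ring
  have hfin : ‖((lenJ aa / (N:ℝ) : ℝ) : ℂ) * ∑ j ∈ Finset.range N,
      (f (u aa N (j+1) x) - f (u aa N (j+1) y))‖ ≤ (1/4) * (Kf * |x - y|) := by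
    rw [norm_mul, Complex.norm_real, Real.norm_eq_abs, abs_of_nonneg hq0]
    have hone : ∀ j ∈ Finset.range N, ‖f (u aa N (j+1) x) - f (u aa N (j+1) y)‖
        ≤ Kf * ((lenJ aa / N) * |x - y|) := by
      intro j hj
      have hju := Finset.mem_range.mp hj
      calc ‖f (u aa N (j+1) x) - f (u aa N (j+1) y)‖
          ≤ Kf * |u aa N (j+1) x - u aa N (j+1) y| :=
            hK _ (u_mem hN hju hx) _ (u_mem hN hju hy)
        _ = Kf * ((lenJ aa / N) * |x - y|) := by
            rw [u_diff, abs_mul, abs_of_nonneg hq0]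
    have h1 : ‖∑ j ∈ Finset.range N, (f (u aa N (j+1) x) - f (u aa N (j+1) y))‖
        ≤ (N:ℝ) * (Kf * ((lenJ aa / N) * |x - y|)) := by
      calc ‖∑ j ∈ Finset.range N, (f (u aa N (j+1) x) - f (u aa N (j+1) y))‖
          ≤ ∑ j ∈ Finset.range N, ‖f (u aa N (j+1) x) - f (u aa N (j+1) y)‖ := norm_sum_le _ _
        _ ≤ ∑ _j ∈ Finset.range N, Kf * ((lenJ aa / N) * |x - y|) := Finset.sum_le_sum hone
        _ = (N:ℝ) * (Kf * ((lenJ aa / N) * |x - y|)) := by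
            rw [Finset.sum_const, Finset.card_range]; simp [nsmul_eq_mul]
    have hN4 : (4:ℝ) ≤ (N:ℝ) := by exact_mod_cast hN
    have hlJ := lenJ_aa_pos
    have hlJ1 := lenJ_aa_le_one
    calc lenJ aa / N * ‖∑ j ∈ Finset.range N, (f (u aa N (j+1) x) - f (u aa N (j+1) y))‖
        ≤ lenJ aa / N * ((N:ℝ) * (Kf * ((lenJ aa / N) * |x - y|))) :=
          mul_le_mul_of_nonneg_left h1 hq0
      _ = (lenJ aa)^2 / N * (Kf * |x - y|) := by field_simp
      _ ≤ (1/4) * (Kf * |x - y|) := by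
          apply mul_le_mul_of_nonneg_right ?_ (by positivity)
          rw [div_le_iff₀ hNpos]  -- (lenJ)^2 ≤ 1/4 * N
          nlinarith
  calc ‖_ + _‖ ≤ _ := norm_add_le _ _
    _ ≤ (Kf * |x - y|) / 25 + (1/4) * (Kf * |x - y|) := add_le_add htsum hfin
    _ ≤ (3/4) * (Kf * |x - y|) := by nlinarith [abs_nonneg (x-y), mul_nonneg hKf0 (abs_nonneg (x-y))]

/-- with `a_n = 1/(100 n³)` and `N ≥ 4`, the Lasota–Yorke inequality
`‖L f‖_Lip ≤ (3/4) ‖f‖_Lip + ‖f‖_{C⁰}` holds for every bounded Lipschitz `f`. -/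
theorem stmt10 (N : ℕ) (hN : 4 ≤ N) (f : ℝ → ℂ) (hf : BddLip f) :
    lipNorm (L aa N f) ≤ (3 / 4) * lipNorm f + supNorm f := by
  obtain ⟨K, hK1, hK2⟩ := hf
  have h01 : (0:ℝ) ∈ Ico (0:ℝ) 1 := ⟨le_refl 0, by norm_num⟩
  haveI hne : Nonempty (Ico (0:ℝ) 1) := ⟨⟨0, h01⟩⟩
  have hK0 : 0 ≤ K := le_trans (norm_nonneg _) (hK1 0 h01)
  have hbddS : BddAbove (Set.range (fun p : Ico (0:ℝ) 1 => ‖f p.1‖)) := by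
    refine ⟨K, ?_⟩
    rintro r ⟨p, rfl⟩
    exact hK1 p.1 p.2
  have hS : ∀ z ∈ Ico (0:ℝ) 1, ‖f z‖ ≤ supNorm f := by
    intro z hz
    exact le_ciSup hbddS (⟨z, hz⟩ : Ico (0:ℝ) 1)
  have hSf0 : 0 ≤ supNorm f := le_trans (norm_nonneg _) (hS 0 h01)
  have hbddK : BddAbove (Set.range (fun p : Ico (0:ℝ) 1 × Ico (0:ℝ) 1 =>
      ‖f p.1.1 - f p.2.1‖ / |p.1.1 - p.2.1|)) := by
    refine ⟨K, ?_⟩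
    rintro r ⟨p, rfl⟩
    by_cases hpq : p.1.1 = p.2.1
    · simp only [hpq, sub_self, norm_zero, abs_zero, div_zero]
      exact hK0
    · have habs : 0 < |p.1.1 - p.2.1| := abs_pos.mpr (sub_ne_zero.mpr hpq)
      rw [div_le_iff₀ habs]
      exact hK2 p.1.1 p.1.2 p.2.1 p.2.2
  have hKf : ∀ s ∈ Ico (0:ℝ) 1, ∀ t ∈ Ico (0:ℝ) 1, ‖f s - f t‖ ≤ lipConst f * |s - t| := by
    intro s hs t ht
    by_cases hst : s = t
    · simp [hst]
    · have habs : 0 < |s - t| := abs_pos.mpr (sub_ne_zero.mpr hst)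
      have h := le_ciSup hbddK ((⟨⟨s, hs⟩, ⟨t, ht⟩⟩ : Ico (0:ℝ) 1 × Ico (0:ℝ) 1))
      exact (div_le_iff₀ habs).mp h
  have hKf0 : 0 ≤ lipConst f := by
    have h := le_ciSup hbddK ((⟨⟨0, h01⟩, ⟨0, h01⟩⟩ : Ico (0:ℝ) 1 × Ico (0:ℝ) 1))
    simpa [lipConst] using h
  have hsup : supNorm (L aa N f) ≤ supNorm f := by
    apply ciSup_le
    intro p
    exact Lsup_bound N hN f (supNorm f) hSf0 hS p.2
  have hlip : lipConst (L aa N f) ≤ (3/4) * lipConst f := by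
    apply ciSup_le
    intro p
    by_cases hpq : p.1.1 = p.2.1
    · simp only [hpq, sub_self, norm_zero, abs_zero, div_zero]
      nlinarith [hKf0]
    · have habs : 0 < |p.1.1 - p.2.1| := abs_pos.mpr (sub_ne_zero.mpr hpq)
      rw [div_le_iff₀ habs]
      have h := Llip_bound N hN f (supNorm f) (lipConst f) hSf0 hKf0 hS hKf p.1.2 p.2.2
      calc ‖L aa N f p.1.1 - L aa N f p.2.1‖
          ≤ (3/4) * (lipConst f * |p.1.1 - p.2.1|) := h
        _ = 3/4 * lipConst f * |p.1.1 - p.2.1| := by ring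
  rw [lipNorm, lipNorm]
  linarith [hsup, hlip, hSf0]

end Gouezel
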